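/- Under Assumption 1, for every x₀ in the maximal robust region of uniform attraction R₀, the running-cost value W(x₀) = sup_π Σ_{i=0}^{∞} ln(g(φ_{x₀}^π(i)) + 1) is finite. -/

import Mathlib

open Metric Set Filter MeasureTheory

noncomputable section

abbrev St (n : ℕ) := EuclideanSpace ℝ (Fin n)

/-- Trajectory of the perturbed discrete-time system. -/
def traj {n m : ℕ} (f : St n → St m → St n) (x₀ : St n) (π : ℕ → St m) : ℕ → St n
  | 0 => x₀
  | k + 1 => f (traj f x₀ π k) (π k)

/-- A perturbation input policy takes values in `D`. -/
def IsPolicy {m : ℕ} (D : Set (St m)) (π : ℕ → St m) : Prop := ∀ k, π k ∈ D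

/-- Maximal robust region of attraction. -/
def RoA {n m : ℕ} (f : St n → St m → St n) (D : Set (St m)) (X : Set (St n)) : Set (St n) :=
  {x₀ | ∀ π, IsPolicy D π →
    (∀ k, traj f x₀ π k ∈ X) ∧ Tendsto (fun k => traj f x₀ π k) atTop (nhds 0)}

/-- `f` is a polynomial map in `(x, d)`. -/
def IsPolyMap2 {n m : ℕ} (f : St n → St m → St n) : Prop :=
  ∃ p : Fin n → MvPolynomial (Fin n ⊕ Fin m) ℝ,
    ∀ x d i, f x d i = MvPolynomial.eval (Sum.elim x d) (p i)

/-- A real-valued polynomial function on the state space. -/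
def IsPolyFun {n : ℕ} (g : St n → ℝ) : Prop :=
  ∃ p : MvPolynomial (Fin n) ℝ, ∀ x, g x = MvPolynomial.eval x p

/-- Assumption 1: uniform local exponential stability. -/
def Assumption1 {n m : ℕ} (f : St n → St m → St n) (D : Set (St m)) (X : Set (St n)) : Prop :=
  ∃ M r lam : ℝ, 0 < M ∧ 0 < r ∧ 0 < lam ∧ lam < 1 ∧ closedBall (0 : St n) r ⊆ X ∧
    ∀ x₀ ∈ closedBall (0 : St n) r, ∀ π, IsPolicy D π →
      ∀ k, ‖traj f x₀ π k‖ ≤ lam ^ k * M * ‖x₀‖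

/-- Maximal robust region of uniform attraction (with ball radius `ε`). -/
def R0 {n m : ℕ} (f : St n → St m → St n) (D : Set (St m)) (X : Set (St n)) (ε : ℝ) :
    Set (St n) :=
  {x₀ | (∃ δ > 0, ∀ π, IsPolicy D π → ∀ k, δ < infDist (traj f x₀ π k) Xᶜ) ∧
        (∃ K : ℕ, ∀ π, IsPolicy D π →
            ∃ k, 0 < k ∧ k ≤ K ∧ traj f x₀ π k ∈ closedBall (0 : St n) ε)}

/-- Extended-real logarithm with the convention `ln 0 = -∞`. -/
def elog (t : ℝ) : EReal := if t = 0 then ⊥ else (Real.log t : EReal)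

/-- The value function `V`. -/
def Vval {n m nX : ℕ} (f : St n → St m → St n) (D : Set (St m))
    (hX : Fin nX → St n → ℝ) (g : St n → ℝ) (x : St n) : EReal :=
  ⨆ π ∈ {π : ℕ → St m | IsPolicy D π}, ⨆ k : ℕ,
    ((∑ i ∈ Finset.range k, Real.log (g (traj f x π i) + 1) : ℝ) : EReal)
      - ⨅ j : Fin nX, elog (max (1 - hX j (traj f x π k)) 0)

/-- The Kruzhkov transformed value function `v = 1 - e^{-V}` (with `e^{-∞} = 0`). -/
def vval {n m nX : ℕ} (f : St n → St m → St n) (D : Set (St m))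
    (hX : Fin nX → St n → ℝ) (g : St n → ℝ) (x : St n) : ℝ :=
  if Vval f D hX g x = ⊤ then 1 else 1 - Real.exp (-(Vval f D hX g x).toReal)

/-- `w` is a (bounded continuous) solution of the Bellman equation. -/
def IsBellmanSolution {n m nX : ℕ} (f : St n → St m → St n) (D : Set (St m))
    (hX : Fin nX → St n → ℝ) (g : St n → ℝ) (w : St n → ℝ) : Prop :=
  (∀ x, min (sInf {y : ℝ | ∃ d ∈ D, y = w x - w (f x d) - g x * (1 - w x)})
            (w x - 1 + ⨅ j : Fin nX, max (1 - hX j x) 0) = 0) ∧ w 0 = 0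

lemma traj_shift {n m : ℕ} (f : St n → St m → St n) (x₀ : St n) (π : ℕ → St m) (a : ℕ) :
    ∀ j, traj f x₀ π (a + j) = traj f (traj f x₀ π a) (fun i => π (a + i)) j := by
  intro j
  induction j with
  | zero => rfl
  | succ j ih =>
    show traj f x₀ π (a + j + 1) = _
    simp only [traj, ih]

theorem stmt13
    {n m nX : ℕ} (hnX : 0 < nX)
    (f : St n → St m → St n) (hfpoly : IsPolyMap2 f)
    (D : Set (St m)) (hD : IsCompact D)
    (hf0 : ∀ d ∈ D, f 0 d = 0)
    (hX : Fin nX → St n → ℝ) (hXpoly : ∀ j, IsPolyFun (hX j))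
    (hX0 : ∀ j, hX j 0 = 0) (hXpos : ∀ j, ∀ x : St n, x ≠ 0 → 0 < hX j x)
    (X : Set (St n)) (hXdef : X = {x | ∀ j, hX j x < 1})
    (hXbdd : Bornology.IsBounded X) (hXopen : IsOpen X)
    (M r lam : ℝ) (hM : 0 < M) (hr : 0 < r) (hlam0 : 0 < lam) (hlam1 : lam < 1)
    (hball : closedBall (0 : St n) r ⊆ X)
    (hstab : ∀ x₀ ∈ closedBall (0 : St n) r, ∀ π, IsPolicy D π →
      ∀ k, ‖traj f x₀ π k‖ ≤ lam ^ k * M * ‖x₀‖)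
    (g : St n → ℝ) (hgpoly : IsPolyFun g) (hgnn : ∀ x, 0 ≤ g x)
    (hgzero : ∀ x : St n, g x = 0 ↔ x = 0)
    :
    ∀ x₀ ∈ R0 f D X (min (r / (2 * M)) (r / 2)),
      (⨆ π ∈ {π : ℕ → St m | IsPolicy D π},
        ∑' i : ℕ, ENNReal.ofReal (Real.log (g (traj f x₀ π i) + 1))) < ⊤ := by
  classical
  -- `g` is analytic, continuous, and `g 0 = 0`
  obtain ⟨p, hp⟩ := hgpoly
  have hg_eval : g = fun x : St n =>
      MvPolynomial.eval
        (((PiLp.continuousLinearEquiv 2 ℝ fun _ : Fin n => ℝ) :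
            St n →L[ℝ] (Fin n → ℝ)) x) p := by
    funext x; exact hp x
  have hgan : AnalyticOnNhd ℝ g Set.univ := by
    rw [hg_eval]; exact AnalyticOnNhd.eval_continuousLinearMap _ p
  have hgc : Continuous g := by
    rw [← continuousOn_univ]; exact hgan.continuousOn
  have hg0 : g 0 = 0 := (hgzero 0).mpr rfl
  set ε := min (r / (2 * M)) (r / 2) with hεdef
  have hε0 : 0 < ε := lt_min (by positivity) (by positivity)
  have hεr : ε ≤ r := (min_le_right _ _).trans (by linarith)
  have hMε0 : 0 < M * ε := by positivity
  have hMεr : M * ε ≤ r := by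
    have : ε ≤ r / (2 * M) := min_le_left _ _
    calc M * ε ≤ M * (r / (2 * M)) := by nlinarith
      _ = r / 2 := by field_simp
      _ ≤ r := by linarith
  -- local Lipschitz bound for `g` near 0
  obtain ⟨KL, t, ht, hlip⟩ :=
    ((hgan 0 trivial).contDiffAt (n := 1)).exists_lipschitzOnWith
  obtain ⟨ρ, hρ0, hρt⟩ := Metric.mem_nhds_iff.mp ht
  have h0t : (0 : St n) ∈ t := hρt (mem_ball_self hρ0)
  have hglin : ∀ x ∈ t, g x ≤ (KL : ℝ) * ‖x‖ := by
    intro x hx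
    have h := hlip.dist_le_mul x hx 0 h0t
    calc g x ≤ |g x| := le_abs_self _
      _ = dist (g x) (g 0) := by rw [hg0, Real.dist_eq, sub_zero]
      _ ≤ (KL : ℝ) * dist x 0 := h
      _ = (KL : ℝ) * ‖x‖ := by rw [dist_zero_right]
  -- choose N with lam^N * (M*ε) < ρ
  obtain ⟨N, hN⟩ := exists_pow_lt_of_lt_one (show (0:ℝ) < ρ / (M * ε) from by positivity) hlam1
  have hNρ : lam ^ N * (M * ε) < ρ := by
    rw [← lt_div_iff₀ hMε0]; exact hN
  -- uniform bound of log (g + 1) on X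
  obtain ⟨R, hR⟩ := hXbdd.subset_closedBall 0
  have h0X : (0 : St n) ∈ X := hball (mem_closedBall_self hr.le)
  obtain ⟨z, hz, hzmax⟩ := (isCompact_closedBall (0 : St n) R).exists_isMaxOn
    ⟨0, hR h0X⟩ hgc.continuousOn
  set C₁ := Real.log (g z + 1) with hC₁
  have hXC : ∀ x ∈ X, Real.log (g x + 1) ≤ C₁ := by
    intro x hx
    exact Real.log_le_log (by linarith [hgnn x]) (by have := hzmax (hR hx); simp only [Set.mem_setOf_eq] at this; linarith)
  intro x₀ hx₀
  obtain ⟨⟨δ, hδ0, hδ⟩, K, hK⟩ := hx₀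
  have hXmem : ∀ π, IsPolicy D π → ∀ k, traj f x₀ π k ∈ X := by
    intro π hπ k
    by_contra h
    have h1 := hδ π hπ k
    rw [infDist_zero_of_mem (Set.mem_compl h)] at h1
    linarith
  set Kt := K + N with hKt
  set c := (KL : ℝ) * (lam ^ N * (M * ε)) with hc
  have hc0 : 0 ≤ c := by positivity
  -- the uniform bound
  set B : ENNReal := (Kt : ENNReal) * ENNReal.ofReal C₁
      + ENNReal.ofReal c * (1 - ENNReal.ofReal lam)⁻¹ with hB
  have hBlt : B < ⊤ := by
    rw [hB, lt_top_iff_ne_top]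
    apply ENNReal.add_ne_top.mpr
    constructor
    · exact ENNReal.mul_ne_top (ENNReal.natCast_ne_top _) ENNReal.ofReal_ne_top
    · refine ENNReal.mul_ne_top ENNReal.ofReal_ne_top (ENNReal.inv_ne_top.mpr ?_)
      have : ENNReal.ofReal lam < 1 := ENNReal.ofReal_lt_one.mpr hlam1
      exact (tsub_pos_iff_lt.mpr this).ne'
  refine lt_of_le_of_lt ?_ hBlt
  refine iSup₂_le fun π hπ => ?_
  obtain ⟨k₀, hk₀pos, hk₀K, hk₀ball⟩ := hK π hπ
  set x₁ := traj f x₀ π k₀ with hx₁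
  have hx₁ε : ‖x₁‖ ≤ ε := mem_closedBall_zero_iff.mp hk₀ball
  have hx₁r : x₁ ∈ closedBall (0 : St n) r :=
    mem_closedBall_zero_iff.mpr (hx₁ε.trans hεr)
  have hπ' : IsPolicy D (fun i => π (k₀ + i)) := fun i => hπ _
  have hdecay : ∀ j, ‖traj f x₀ π (k₀ + j)‖ ≤ lam ^ j * (M * ε) := by
    intro j
    rw [traj_shift]
    calc ‖traj f x₁ (fun i => π (k₀ + i)) j‖ ≤ lam ^ j * M * ‖x₁‖ :=
          hstab x₁ hx₁r _ hπ' j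
      _ ≤ lam ^ j * (M * ε) := by
          have h1 : (0:ℝ) ≤ lam ^ j * M := by positivity
          nlinarith
  set u : ℕ → ENNReal := fun i => ENNReal.ofReal (Real.log (g (traj f x₀ π i) + 1)) with hu
  have hsplit : ∑' i, u i = ∑ i ∈ Finset.range Kt, u i + ∑' j, u (j + Kt) :=
    ((ENNReal.summable (f := fun j => u (j + Kt))).hasSum.sum_range_add).tsum_eq
  have hhead : ∑ i ∈ Finset.range Kt, u i ≤ (Kt : ENNReal) * ENNReal.ofReal C₁ := by
    calc ∑ i ∈ Finset.range Kt, u i ≤ (Finset.range Kt).card • ENNReal.ofReal C₁ := by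
          refine Finset.sum_le_card_nsmul _ _ _ fun i _ => ?_
          exact ENNReal.ofReal_le_ofReal (hXC _ (hXmem π hπ i))
      _ = (Kt : ENNReal) * ENNReal.ofReal C₁ := by
          rw [Finset.card_range, nsmul_eq_mul]
  have htail : ∀ j : ℕ, u (j + Kt) ≤ ENNReal.ofReal c * ENNReal.ofReal lam ^ j := by
    intro j
    set i := j + Kt with hi
    have hik : i = k₀ + (i - k₀) := by omega
    have hj' : N + j ≤ i - k₀ := by omega
    have hnorm : ‖traj f x₀ π i‖ ≤ lam ^ (N + j) * (M * ε) := by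
      calc ‖traj f x₀ π i‖ = ‖traj f x₀ π (k₀ + (i - k₀))‖ := by rw [← hik]
        _ ≤ lam ^ (i - k₀) * (M * ε) := hdecay _
        _ ≤ lam ^ (N + j) * (M * ε) :=
            mul_le_mul_of_nonneg_right
              (pow_le_pow_of_le_one hlam0.le hlam1.le hj') hMε0.le
    have hmemt : traj f x₀ π i ∈ t := by
      apply hρt
      rw [mem_ball_zero_iff]
      have h1 : lam ^ (N + j) ≤ lam ^ N :=
        pow_le_pow_of_le_one hlam0.le hlam1.le (Nat.le_add_right _ _)
      have h2 : lam ^ (N + j) * (M * ε) ≤ lam ^ N * (M * ε) :=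
        mul_le_mul_of_nonneg_right h1 hMε0.le
      linarith
    have hgb : g (traj f x₀ π i) ≤ c * lam ^ j := by
      calc g (traj f x₀ π i) ≤ (KL : ℝ) * ‖traj f x₀ π i‖ := hglin _ hmemt
        _ ≤ (KL : ℝ) * (lam ^ (N + j) * (M * ε)) := by
            exact mul_le_mul_of_nonneg_left hnorm KL.coe_nonneg
        _ = c * lam ^ j := by rw [hc, pow_add]; ring
    have hlog : Real.log (g (traj f x₀ π i) + 1) ≤ c * lam ^ j := by
      have h1 : (0:ℝ) < g (traj f x₀ π i) + 1 := by linarith [hgnn (traj f x₀ π i)]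
      have h2 := Real.log_le_sub_one_of_pos h1
      linarith
    calc u (j + Kt) ≤ ENNReal.ofReal (c * lam ^ j) := ENNReal.ofReal_le_ofReal hlog
      _ = ENNReal.ofReal c * ENNReal.ofReal lam ^ j := by
          rw [ENNReal.ofReal_mul hc0, ENNReal.ofReal_pow hlam0.le]
  calc ∑' i, u i = ∑ i ∈ Finset.range Kt, u i + ∑' j, u (j + Kt) := hsplit
    _ ≤ (Kt : ENNReal) * ENNReal.ofReal C₁
        + ENNReal.ofReal c * (1 - ENNReal.ofReal lam)⁻¹ := by
        refine add_le_add hhead ?_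
        calc ∑' j, u (j + Kt) ≤ ∑' j, ENNReal.ofReal c * ENNReal.ofReal lam ^ j :=
              ENNReal.tsum_le_tsum htail
          _ = ENNReal.ofReal c * ∑' j, ENNReal.ofReal lam ^ j := ENNReal.tsum_mul_left
          _ = ENNReal.ofReal c * (1 - ENNReal.ofReal lam)⁻¹ := by
              rw [ENNReal.tsum_geometric]
    _ = B := hB.symm
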